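/- Let q be a real number with 0 < q < 1. Then the fourth cumulant of the random variable γ_n^*(1) satisfies lim_{n→∞} ( e_{n,4}(q) - 4 e_{n,1}(q) e_{n,3}(q) - 3 e_{n,2}(q)^2 + 12 e_{n,1}(q)^2 e_{n,2}(q) - 6 e_{n,1}(q)^4 ) = ∑_{m=1}^∞ σ_3(m) q^m. -/

import Mathlib

/-- The `k`-th moment `e_{n,k}(q) = ∑_{h=1}^n h^k q^{n-h} ∏_{j=1}^{h-1} (1 - q^{n-j})`
of the Simon–Crippa–Collenberg random variable `γ_n^*(1)`. -/
noncomputable def momentE (q : ℝ) (n k : ℕ) : ℝ :=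
  ∑ h ∈ Finset.Icc 1 n, (h : ℝ) ^ k * q ^ (n - h) * ∏ j ∈ Finset.Icc 1 (h - 1), (1 - q ^ (n - j))

open Finset Filter

namespace CumulantAux

noncomputable def Dq (q : ℝ) (m : ℕ) : ℝ := ∏ i ∈ Finset.Icc 1 m, (1 - q ^ i)
noncomputable def cq (q : ℝ) (m : ℕ) : ℝ := q ^ m / Dq q m
noncomputable def sq (q : ℝ) (r : ℕ) : ℝ := q ^ r / (1 - q ^ r)
noncomputable def Tq (q : ℝ) (k : ℕ) : ℝ := ∑' m : ℕ, (m : ℝ) ^ k * cq q m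
noncomputable def Sq (q : ℝ) (b : ℕ) : ℝ := ∑' r : ℕ, (r : ℝ) ^ b * sq q r
noncomputable def Cq (q : ℝ) : ℝ := ⨅ m : ℕ, Dq q m
noncomputable def Gfun (q : ℝ) : ℕ × ℕ → ℝ :=
  fun p => if p.1 = 0 ∨ p.2 = 0 then 0 else (p.1 : ℝ) ^ 3 * q ^ (p.1 * p.2)
/-- The shifted-moment functions. -/
noncomputable def Fq (q : ℝ) (n k : ℕ) : ℝ :=
  Dq q (n - 1) * ∑ m ∈ Finset.range n, (m : ℝ) ^ k * cq q m

variable {q : ℝ}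

lemma pow_lt_one' (hq0 : 0 < q) (hq1 : q < 1) {i : ℕ} (hi : i ≠ 0) : q ^ i < 1 :=
  pow_lt_one₀ hq0.le hq1 hi

lemma Dq_pos (hq0 : 0 < q) (hq1 : q < 1) (m : ℕ) : 0 < Dq q m := by
  refine Finset.prod_pos fun i hi => ?_
  have hi' : i ≠ 0 := by simp at hi; omega
  have := pow_lt_one' hq0 hq1 hi'
  linarith

lemma Dq_zero : Dq q 0 = 1 := by simp [Dq]

lemma Dq_succ (m : ℕ) : Dq q (m + 1) = Dq q m * (1 - q ^ (m + 1)) := by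
  rw [Dq, Dq, Finset.prod_Icc_succ_top (by omega)]

lemma Dq_anti (hq0 : 0 < q) (hq1 : q < 1) : Antitone (Dq q) := by
  refine antitone_nat_of_succ_le fun m => ?_
  rw [Dq_succ]
  have h1 : 0 < Dq q m := Dq_pos hq0 hq1 m
  have h2 : 0 < q ^ (m + 1) := pow_pos hq0 _
  nlinarith

lemma one_sub_sum_le_prod_one_sub (F : Finset ℕ) (x : ℕ → ℝ)
    (h0 : ∀ i ∈ F, 0 ≤ x i) (h1 : ∀ i ∈ F, x i ≤ 1) :
    1 - ∑ i ∈ F, x i ≤ ∏ i ∈ F, (1 - x i) := by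
  classical
  induction F using Finset.cons_induction with
  | empty => simp
  | cons a F ha ih =>
    rw [Finset.sum_cons, Finset.prod_cons]
    have hxa0 := h0 a (Finset.mem_cons_self a F)
    have hxa1 := h1 a (Finset.mem_cons_self a F)
    have ihh := ih (fun i hi => h0 i (Finset.mem_cons_of_mem hi))
      (fun i hi => h1 i (Finset.mem_cons_of_mem hi))
    have hS : 0 ≤ ∑ i ∈ F, x i := Finset.sum_nonneg fun i hi => h0 i (Finset.mem_cons_of_mem hi)
    nlinarith

lemma Dq_split (hq0 : 0 < q) (hq1 : q < 1) {a b : ℕ} (hab : a ≤ b) :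
    Dq q b = Dq q a * ∏ i ∈ Finset.Ioc a b, (1 - q ^ i) := by
  rw [Dq, Dq, show Finset.Icc 1 b = Finset.Ioc 0 b from Finset.Icc_add_one_left_eq_Ioc 0 b,
    show Finset.Icc 1 a = Finset.Ioc 0 a from Finset.Icc_add_one_left_eq_Ioc 0 a]
  exact (Finset.prod_Ioc_consecutive _ (Nat.zero_le a) hab).symm

lemma Dq_lower (hq0 : 0 < q) (hq1 : q < 1) : ∃ δ : ℝ, 0 < δ ∧ ∀ m, δ ≤ Dq q m := by
  obtain ⟨N, hN⟩ : ∃ N : ℕ, q ^ N < (1 - q) / 2 :=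
    exists_pow_lt_of_lt_one (by linarith) hq1
  refine ⟨Dq q N / 2, by have := Dq_pos hq0 hq1 N; linarith, fun m => ?_⟩
  rcases le_or_gt m N with h | h
  · have := Dq_anti hq0 hq1 h
    have := Dq_pos hq0 hq1 N
    linarith
  · rw [Dq_split hq0 hq1 h.le]
    have hprod : 1 - ∑ i ∈ Finset.Ioc N m, q ^ i ≤ ∏ i ∈ Finset.Ioc N m, (1 - q ^ i) := by
      refine one_sub_sum_le_prod_one_sub _ _ (fun i hi => by positivity) (fun i hi => ?_)
      have : i ≠ 0 := by simp at hi; omega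
      have := pow_lt_one' hq0 hq1 this
      linarith
    have hsum : ∑ i ∈ Finset.Ioc N m, q ^ i ≤ 1 / 2 := by
      have h1 : Finset.Ioc N m = Finset.Ico (N + 1) (m + 1) := by
        ext i; simp [Nat.lt_succ_iff]
      rw [h1, Finset.sum_Ico_eq_sum_range]
      have : ∀ j ∈ Finset.range (m + 1 - (N + 1)), q ^ (N + 1 + j) = q ^ (N + 1) * q ^ j :=
        fun j _ => pow_add q _ _
      rw [Finset.sum_congr rfl this, ← Finset.mul_sum]
      have hgeom : ∑ j ∈ Finset.range (m + 1 - (N + 1)), q ^ j ≤ (1 - q)⁻¹ := by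
        rw [← tsum_geometric_of_lt_one hq0.le hq1]
        exact Summable.sum_le_tsum _ (fun i _ => by positivity)
          (summable_geometric_of_lt_one hq0.le hq1)
      have hq' : 0 < 1 - q := by linarith
      have hNq : 0 < q ^ (N+1) := pow_pos hq0 _
      have hle : q ^ (N + 1) * ((1-q)⁻¹) ≤ 1/2 := by
        have h2 : q ^ (N+1) < (1-q)/2 := by rw [pow_succ]; nlinarith
        have hinv : (1-q) * (1-q)⁻¹ = 1 := mul_inv_cancel₀ (by linarith)
        have hipos : (0:ℝ) < (1-q)⁻¹ := inv_pos.mpr hq'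
        nlinarith [mul_lt_mul_of_pos_right h2 hipos]
      calc q ^ (N+1) * ∑ j ∈ Finset.range (m + 1 - (N + 1)), q ^ j 
          ≤ q ^ (N+1) * (1-q)⁻¹ := by
            apply mul_le_mul_of_nonneg_left hgeom hNq.le
        _ ≤ 1/2 := hle
    have hD := Dq_pos hq0 hq1 N
    have hh : (1:ℝ)/2 ≤ ∏ i ∈ Finset.Ioc N m, (1 - q ^ i) := by linarith
    nlinarith



lemma Dq_zero' : Dq q 0 = 1 := by simp [Dq]

lemma cq_zero : cq q 0 = 1 := by simp [cq, Dq_zero']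

lemma cq_pos (hq0 : 0 < q) (hq1 : q < 1) (m : ℕ) : 0 < cq q m :=
  div_pos (pow_pos hq0 m) (Dq_pos hq0 hq1 m)

lemma one_sub_pow_pos (hq0 : 0 < q) (hq1 : q < 1) {i : ℕ} (hi : i ≠ 0) :
    0 < 1 - q ^ i := by have := pow_lt_one' hq0 hq1 hi; linarith

lemma cq_rec (hq0 : 0 < q) (hq1 : q < 1) (m : ℕ) :
    cq q (m + 1) * (1 - q ^ (m + 1)) = q * cq q m := by
  have h1 : Dq q m ≠ 0 := (Dq_pos hq0 hq1 m).ne'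
  have h2 : (1 : ℝ) - q ^ (m+1) ≠ 0 := (one_sub_pow_pos hq0 hq1 (by omega)).ne'
  rw [cq, cq, Dq_succ]
  field_simp
  ring

lemma sq_rec (hq0 : 0 < q) (hq1 : q < 1) {r : ℕ} (hr : r ≠ 0) :
    sq q r * (1 - q ^ r) = q ^ r := by
  have h2 : (1 : ℝ) - q ^ r ≠ 0 := (one_sub_pow_pos hq0 hq1 hr).ne'
  rw [sq]; field_simp

lemma sq_zero : sq q 0 = 0 := by simp [sq]

lemma sq_nonneg (hq0 : 0 < q) (hq1 : q < 1) (r : ℕ) : 0 ≤ sq q r := by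
  rcases Nat.eq_zero_or_pos r with rfl | hr
  · simp [sq_zero]
  · exact (div_pos (pow_pos hq0 r) (one_sub_pow_pos hq0 hq1 hr.ne')).le

/-- J : partial sums of `cq` -/
lemma J (hq0 : 0 < q) (hq1 : q < 1) (m : ℕ) :
    ∑ j ∈ Finset.range (m + 1), cq q j = 1 / Dq q m := by
  induction m with
  | zero => simp [cq_zero, Dq_zero']
  | succ m ih =>
    rw [Finset.sum_range_succ, ih, cq, Dq_succ]
    have h1 : Dq q m ≠ 0 := (Dq_pos hq0 hq1 m).ne'
    have h2 : (1 : ℝ) - q ^ (m+1) ≠ 0 := (one_sub_pow_pos hq0 hq1 (by omega)).ne'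
    field_simp
    ring

/-- The key convolution identity `∑_{r=1}^m s_r c_{m-r} = m c_m`. -/
lemma keyI (hq0 : 0 < q) (hq1 : q < 1) (m : ℕ) :
    ∑ r ∈ Finset.Icc 1 m, sq q r * cq q (m - r) = (m : ℝ) * cq q m := by
  induction m with
  | zero => simp
  | succ m ih =>
    have hDm : Dq q m ≠ 0 := (Dq_pos hq0 hq1 m).ne'
    have hP : (1 : ℝ) - q ^ (m+1) ≠ 0 := (one_sub_pow_pos hq0 hq1 (by omega)).ne'
    -- split off top term
    rw [Finset.sum_Icc_succ_top (by omega : 1 ≤ m + 1)]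
    have htop : sq q (m+1) * cq q (m+1-(m+1)) = sq q (m+1) := by
      simp [cq_zero]
    rw [htop]
    set A : ℝ := ∑ r ∈ Finset.Icc 1 m, sq q r * cq q (m + 1 - r) with hA
    -- per-term expansion
    have hterm : ∀ r ∈ Finset.Icc 1 m,
        sq q r * cq q (m + 1 - r)
          = q * (sq q r * cq q (m - r)) + q ^ (m+1) * cq q (m + 1 - r)
            + q ^ (m+1) * (sq q r * cq q (m + 1 - r)) := by
      intro r hr
      simp only [Finset.mem_Icc] at hr
      have hr1 : r ≠ 0 := by omega
      have hidx : m + 1 - r = (m - r) + 1 := by omega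
      -- c (m+1-r) = q c(m-r) + q^{m+1-r} c(m+1-r)
      have hc : cq q (m + 1 - r) = q * cq q (m - r) + q ^ (m + 1 - r) * cq q (m + 1 - r) := by
        have := cq_rec hq0 hq1 (m - r)
        rw [← hidx] at this
        nlinarith [this]
      -- s r * q^{m+1-r} = q^{m+1} * (1 + s r)
      have hs : sq q r * q ^ (m + 1 - r) = q ^ (m+1) * (1 + sq q r) := by
        have h1 := sq_rec hq0 hq1 hr1
        have hpow : q ^ r * q ^ (m + 1 - r) = q ^ (m+1) := by
          rw [← pow_add]; congr 1; omega
        linear_combination (q ^ (m + 1 - r)) * h1 + (1 + sq q r) * hpow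
      linear_combination sq q r * hc + cq q (m + 1 - r) * hs
    set B : ℝ := ∑ r ∈ Finset.Icc 1 m, cq q (m + 1 - r) with hBdef
    have hsplit : A = q * ((m:ℝ) * cq q m) + q ^ (m+1) * B + q ^ (m+1) * A := by
      conv_lhs => rw [hA, Finset.sum_congr rfl hterm]
      rw [Finset.sum_add_distrib, Finset.sum_add_distrib, ← Finset.mul_sum, ← Finset.mul_sum,
        ← Finset.mul_sum, ih, ← hBdef, ← hA]
    -- B = 1/Dq m - 1
    have hB : B = 1 / Dq q m - 1 := by
      rw [hBdef]
      have hbij : ∑ r ∈ Finset.Icc 1 m, cq q (m + 1 - r) = ∑ j ∈ Finset.Icc 1 m, cq q j := by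
        refine Finset.sum_nbij' (fun r => m + 1 - r) (fun j => m + 1 - j) ?_ ?_ ?_ ?_ ?_
        · intro a ha; simp only [Finset.mem_Icc] at *; omega
        · intro a ha; simp only [Finset.mem_Icc] at *; omega
        · intro a ha; simp only [Finset.mem_Icc] at *; omega
        · intro a ha; simp only [Finset.mem_Icc] at *; omega
        · intro a ha; rfl
      rw [hbij]
      have := J hq0 hq1 m
      have hins : ∑ j ∈ Finset.range (m+1), cq q j = cq q 0 + ∑ j ∈ Finset.Icc 1 m, cq q j := by
        have : Finset.range (m+1) = insert 0 (Finset.Icc 1 m) := by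
          ext i; simp [Finset.mem_range, Finset.mem_insert, Finset.mem_Icc]; omega
        rw [this, Finset.sum_insert (by simp)]
      rw [hins, cq_zero] at this
      linarith
    rw [hB] at hsplit
    -- conclude: multiply target by (1 - q^{m+1})
    have hcm : q * cq q m = q ^ (m+1) * (1 / Dq q m) := by
      rw [cq, pow_succ]
      field_simp
    have hgoal : (A + sq q (m+1)) * (1 - q ^ (m+1)) = ((m+1 : ℕ) : ℝ) * cq q (m+1) * (1 - q ^ (m+1)) := by
      have hsq : sq q (m+1) * (1 - q ^ (m+1)) = q ^ (m+1) := sq_rec hq0 hq1 (by omega)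
      have hcq : cq q (m+1) * (1 - q ^ (m+1)) = q * cq q m := cq_rec hq0 hq1 m
      have hAP : A * (1 - q ^ (m+1)) = q * ((m:ℝ) * cq q m) + q ^ (m+1) * (1 / Dq q m) - q ^ (m+1) := by
        nlinarith [hsplit]
      push_cast
      calc (A + sq q (m+1)) * (1 - q ^ (m+1))
          = A * (1 - q ^ (m+1)) + sq q (m+1) * (1 - q ^ (m+1)) := by ring
        _ = q * ((m:ℝ) * cq q m) + q ^ (m+1) * (1 / Dq q m) - q ^ (m+1) + q ^ (m+1) := by
            rw [hAP, hsq]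
        _ = ((m:ℝ) + 1) * (q * cq q m) := by rw [← hcm]; ring
        _ = ((m:ℝ) + 1) * cq q (m+1) * (1 - q ^ (m+1)) := by rw [← hcq]; ring
    exact mul_right_cancel₀ hP hgoal

lemma summable_c (hq0 : 0 < q) (hq1 : q < 1) (k : ℕ) :
    Summable (fun m : ℕ => (m : ℝ) ^ k * cq q m) := by
  obtain ⟨δ, hδ, hδle⟩ := Dq_lower hq0 hq1
  have hbase : Summable (fun m : ℕ => (m : ℝ) ^ k * q ^ m) :=
    summable_pow_mul_geometric_of_norm_lt_one k (by rw [Real.norm_eq_abs, abs_of_pos hq0]; exact hq1)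
  refine Summable.of_nonneg_of_le (fun m => ?_) (fun m => ?_) (hbase.mul_left δ⁻¹)
  · exact mul_nonneg (by positivity) (cq_pos hq0 hq1 m).le
  · rw [cq]
    have h1 : q ^ m / Dq q m ≤ q ^ m / δ := by
      apply div_le_div_of_nonneg_left (by positivity) hδ (hδle m)
    calc (m:ℝ)^k * (q ^ m / Dq q m) ≤ (m:ℝ)^k * (q^m/δ) := by
          apply mul_le_mul_of_nonneg_left h1 (by positivity)
      _ = δ⁻¹ * ((m:ℝ)^k * q^m) := by rw [div_eq_mul_inv]; ring

lemma sq_le (hq0 : 0 < q) (hq1 : q < 1) (r : ℕ) : sq q r ≤ q ^ r / (1 - q) := by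
  rcases Nat.eq_zero_or_pos r with rfl | hr
  · rw [sq_zero]
    have : (0:ℝ) < 1 - q := by linarith
    positivity
  · rw [sq]
    have h0 : q ^ r ≤ q := by
      simpa using pow_le_pow_of_le_one hq0.le hq1.le hr
    exact div_le_div_of_nonneg_left (by positivity) (by linarith) (by linarith)

lemma summable_s (hq0 : 0 < q) (hq1 : q < 1) (b : ℕ) :
    Summable (fun r : ℕ => (r : ℝ) ^ b * sq q r) := by
  have hbase : Summable (fun m : ℕ => (m : ℝ) ^ b * q ^ m) :=
    summable_pow_mul_geometric_of_norm_lt_one b (by rw [Real.norm_eq_abs, abs_of_pos hq0]; exact hq1)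
  refine Summable.of_nonneg_of_le (fun m => ?_) (fun m => ?_) (hbase.mul_left (1-q)⁻¹)
  · exact mul_nonneg (by positivity) (sq_nonneg hq0 hq1 m)
  · calc (m:ℝ)^b * sq q m ≤ (m:ℝ)^b * (q^m/(1-q)) := by
          apply mul_le_mul_of_nonneg_left (sq_le hq0 hq1 m) (by positivity)
      _ = (1-q)⁻¹ * ((m:ℝ)^b * q^m) := by rw [div_eq_mul_inv]; ring

/-- pointwise rewrite of `m^k c_m` as an antidiagonal sum -/
lemma point_antidiag0 (hq0 : 0 < q) (hq1 : q < 1) {k : ℕ} (hk : k ≠ 0) (m : ℕ) :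
    (m : ℝ) ^ k * cq q m
      = ∑ kl ∈ Finset.HasAntidiagonal.antidiagonal m,
          ((kl.1 : ℝ) + (kl.2 : ℝ)) ^ (k - 1) * (sq q kl.1 * cq q kl.2) := by
  rw [Finset.Nat.sum_antidiagonal_eq_sum_range_succ
    (fun i j => ((i : ℝ) + (j : ℝ)) ^ (k - 1) * (sq q i * cq q j))]
  have step1 : (m : ℝ) ^ k * cq q m = (m : ℝ) ^ (k-1) * ((m:ℝ) * cq q m) := by
    rw [← mul_assoc, ← pow_succ]
    congr 2
    omega
  rw [step1, ← keyI hq0 hq1 m, Finset.mul_sum]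
  have hext : ∑ r ∈ Finset.Icc 1 m, (m:ℝ)^(k-1) * (sq q r * cq q (m - r))
      = ∑ r ∈ Finset.range (m+1), (m:ℝ)^(k-1) * (sq q r * cq q (m - r)) := by
    have : Finset.range (m+1) = insert 0 (Finset.Icc 1 m) := by
      ext i; simp [Finset.mem_range, Finset.mem_insert, Finset.mem_Icc]; omega
    rw [this, Finset.sum_insert (by simp), sq_zero]
    simp
  rw [hext]
  refine Finset.sum_congr rfl fun r hr => ?_
  simp only [Finset.mem_range] at hr
  have hcast : (m : ℝ) = (r : ℝ) + ((m - r : ℕ) : ℝ) := by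
    have h2 : (r:ℝ) + ((m - r : ℕ):ℝ) = ((r + (m - r) : ℕ) : ℝ) := by push_cast; ring
    rw [h2]
    congr 1
    omega
  rw [hcast]

lemma point_expand {k : ℕ} (hk : k ≠ 0) (x y u v : ℝ) :
    (x + y) ^ (k - 1) * (u * v)
      = ∑ a ∈ Finset.range k, (Nat.choose (k-1) a : ℝ) * (x ^ (k - 1 - a) * u) * (y ^ a * v) := by
  have h1 : (y + x) ^ (k-1) = ∑ a ∈ Finset.range k, y ^ a * x ^ (k - 1 - a) * (Nat.choose (k-1) a : ℝ) := by
    rw [add_pow]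
    have hk1 : k - 1 + 1 = k := by omega
    rw [hk1]
  rw [show (x + y) ^ (k-1) = (y + x) ^ (k-1) by ring, h1, Finset.sum_mul]
  refine Finset.sum_congr rfl fun a ha => ?_
  ring

/-- The master recursion for moments. -/
lemma Tq_rec (hq0 : 0 < q) (hq1 : q < 1) {k : ℕ} (hk : k ≠ 0) :
    Tq q k = ∑ a ∈ Finset.range k, (Nat.choose (k-1) a : ℝ) * Sq q (k - 1 - a) * Tq q a := by
  have hnorm_s : ∀ b : ℕ, Summable (fun r : ℕ => ‖(r : ℝ) ^ b * sq q r‖) := by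
    intro b
    have := summable_s hq0 hq1 b
    refine this.congr fun r => ?_
    rw [Real.norm_eq_abs, abs_of_nonneg (mul_nonneg (by positivity) (sq_nonneg hq0 hq1 r))]
  have hnorm_c : ∀ a : ℕ, Summable (fun m : ℕ => ‖(m : ℝ) ^ a * cq q m‖) := by
    intro a
    have := summable_c hq0 hq1 a
    refine this.congr fun r => ?_
    rw [Real.norm_eq_abs, abs_of_nonneg (mul_nonneg (by positivity) (cq_pos hq0 hq1 r).le)]
  have hsumm : ∀ a b : ℕ, Summable (fun m : ℕ =>
      ∑ kl ∈ Finset.HasAntidiagonal.antidiagonal m, ((kl.1 : ℝ) ^ b * sq q kl.1) * ((kl.2 : ℝ) ^ a * cq q kl.2)) :=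
    fun a b => summable_sum_mul_antidiagonal_of_summable_norm'
      (f := fun r : ℕ => (r:ℝ)^b * sq q r) (g := fun m : ℕ => (m:ℝ)^a * cq q m)
      (hnorm_s b) (summable_s hq0 hq1 b) (hnorm_c a) (summable_c hq0 hq1 a)
  have step1 : Tq q k = ∑' m : ℕ, ∑ a ∈ Finset.range k, (Nat.choose (k-1) a : ℝ) *
        (∑ kl ∈ Finset.HasAntidiagonal.antidiagonal m,
          ((kl.1 : ℝ) ^ (k - 1 - a) * sq q kl.1) * ((kl.2 : ℝ) ^ a * cq q kl.2)) := by
    rw [Tq]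
    refine tsum_congr fun m => ?_
    rw [point_antidiag0 hq0 hq1 hk m]
    rw [Finset.sum_congr rfl fun kl _ => point_expand hk (kl.1:ℝ) (kl.2:ℝ) (sq q kl.1) (cq q kl.2)]
    rw [Finset.sum_comm]
    refine Finset.sum_congr rfl fun a _ => ?_
    rw [Finset.mul_sum]
    refine Finset.sum_congr rfl fun kl _ => by ring
  have step2 : (∑' m : ℕ, ∑ a ∈ Finset.range k, (Nat.choose (k-1) a : ℝ) *
        (∑ kl ∈ Finset.HasAntidiagonal.antidiagonal m,
          ((kl.1 : ℝ) ^ (k - 1 - a) * sq q kl.1) * ((kl.2 : ℝ) ^ a * cq q kl.2)))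
      = ∑ a ∈ Finset.range k, (Nat.choose (k-1) a : ℝ) *
        (∑' m : ℕ, ∑ kl ∈ Finset.HasAntidiagonal.antidiagonal m,
          ((kl.1 : ℝ) ^ (k - 1 - a) * sq q kl.1) * ((kl.2 : ℝ) ^ a * cq q kl.2)) := by
    rw [Summable.tsum_finsetSum (fun a _ => Summable.mul_left _ (hsumm a (k-1-a)))]
    exact Finset.sum_congr rfl fun a _ => by rw [tsum_mul_left]
  have step3 : ∀ a : ℕ, (∑' m : ℕ, ∑ kl ∈ Finset.HasAntidiagonal.antidiagonal m,
          ((kl.1 : ℝ) ^ (k - 1 - a) * sq q kl.1) * ((kl.2 : ℝ) ^ a * cq q kl.2))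
      = Sq q (k - 1 - a) * Tq q a := by
    intro a
    rw [← tsum_mul_tsum_eq_tsum_sum_antidiagonal_of_summable_norm
      (f := fun r : ℕ => (r:ℝ)^(k-1-a) * sq q r) (g := fun m : ℕ => (m:ℝ)^a * cq q m)
      (hnorm_s (k-1-a)) (hnorm_c a)]
    rw [Sq, Tq]
  rw [step1, step2]
  refine Finset.sum_congr rfl fun a _ => ?_
  rw [step3 a]
  ring

lemma Dq_tendsto (hq0 : 0 < q) (hq1 : q < 1) :
    Tendsto (Dq q) atTop (nhds (Cq q)) := by
  apply tendsto_atTop_ciInf (Dq_anti hq0 hq1)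
  exact ⟨0, fun x hx => by obtain ⟨m, rfl⟩ := hx; exact (Dq_pos hq0 hq1 m).le⟩

/-- reindexing of the inner product -/
lemma prod_inner (hq0 : 0 < q) (hq1 : q < 1) {n h : ℕ} (h1 : 1 ≤ h) (h2 : h ≤ n) :
    ∏ j ∈ Finset.Icc 1 (h - 1), (1 - q ^ (n - j)) = Dq q (n - 1) / Dq q (n - h) := by
  have hstep : ∏ j ∈ Finset.Icc 1 (h - 1), (1 - q ^ (n - j))
      = ∏ i ∈ Finset.Ioc (n - h) (n - 1), (1 - q ^ i) := by
    refine Finset.prod_nbij' (fun j => n - j) (fun i => n - i) ?_ ?_ ?_ ?_ ?_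
    · intro a ha; simp only [Finset.mem_Icc, Finset.mem_Ioc] at *; omega
    · intro a ha; simp only [Finset.mem_Icc, Finset.mem_Ioc] at *; omega
    · intro a ha; simp only [Finset.mem_Icc] at *; omega
    · intro a ha; simp only [Finset.mem_Ioc] at *; omega
    · intro a ha; rfl
  rw [hstep]
  have hsplit := Dq_split hq0 hq1 (show n - h ≤ n - 1 by omega)
  have hD : Dq q (n - h) ≠ 0 := (Dq_pos hq0 hq1 _).ne'
  rw [eq_div_iff hD, hsplit]
  ring

/-- the shifted moment sums -/
lemma shiftE (hq0 : 0 < q) (hq1 : q < 1) {n : ℕ} (hn : 1 ≤ n) (k : ℕ) :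
    ∑ h ∈ Finset.Icc 1 n, ((n : ℝ) - (h : ℝ)) ^ k * q ^ (n - h) *
        ∏ j ∈ Finset.Icc 1 (h - 1), (1 - q ^ (n - j))
      = Dq q (n - 1) * ∑ m ∈ Finset.range n, (m : ℝ) ^ k * cq q m := by
  rw [Finset.mul_sum]
  refine Finset.sum_nbij' (fun h => n - h) (fun m => n - m) ?_ ?_ ?_ ?_ ?_
  · intro a ha; simp only [Finset.mem_Icc, Finset.mem_range] at *; omega
  · intro a ha; simp only [Finset.mem_Icc, Finset.mem_range] at *; omega
  · intro a ha; simp only [Finset.mem_Icc] at *; omega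
  · intro a ha; simp only [Finset.mem_range] at *; omega
  · intro h hh
    simp only [Finset.mem_Icc] at hh
    rw [prod_inner hq0 hq1 hh.1 hh.2]
    have hcast : ((n - h : ℕ) : ℝ) = (n : ℝ) - (h : ℝ) := by
      push_cast [Nat.cast_sub hh.2]; ring
    rw [cq, hcast]
    have hD : Dq q (n - h) ≠ 0 := (Dq_pos hq0 hq1 _).ne'
    field_simp

lemma Gfun_nonneg (hq0 : 0 < q) : ∀ p, 0 ≤ Gfun q p := by
  intro p
  rw [Gfun]
  split_ifs with h
  · exact le_refl 0
  · positivity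

lemma Gfun_pos_eq {r t : ℕ} (hr : r ≠ 0) (ht : t ≠ 0) :
    Gfun q (r, t) = (r : ℝ) ^ 3 * q ^ (r * t) := by
  rw [Gfun, if_neg]
  simp [hr, ht]

lemma Gfun_zero_left (t : ℕ) : Gfun q (0, t) = 0 := by rw [Gfun, if_pos]; left; rfl

lemma Gfun_zero_right (r : ℕ) : Gfun q (r, 0) = 0 := by rw [Gfun, if_pos]; right; rfl

lemma Gfun_row_summable (hq0 : 0 < q) (hq1 : q < 1) (r : ℕ) :
    Summable (fun t => Gfun q (r, t)) := by
  rcases Nat.eq_zero_or_pos r with rfl | hr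
  · simpa [Gfun_zero_left] using summable_zero
  · have hq : 0 ≤ q ^ r := by positivity
    have hq' : q ^ r < 1 := by
      have := one_sub_pow_pos hq0 hq1 hr.ne'
      linarith
    refine Summable.of_nonneg_of_le (fun t => Gfun_nonneg hq0 _) (fun t => ?_)
      ((summable_geometric_of_lt_one hq hq').mul_left ((r:ℝ)^3))
    rcases Nat.eq_zero_or_pos t with rfl | ht
    · rw [Gfun_zero_right]
      positivity
    · rw [Gfun_pos_eq hr.ne' ht.ne', pow_mul]

lemma Gfun_row_tsum (hq0 : 0 < q) (hq1 : q < 1) (r : ℕ) :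
    ∑' t, Gfun q (r, t) = (r : ℝ) ^ 3 * sq q r := by
  rcases Nat.eq_zero_or_pos r with rfl | hr
  · simp [Gfun_zero_left, sq]
  · have hq : 0 ≤ q ^ r := by positivity
    have hq' : q ^ r < 1 := by
      have := one_sub_pow_pos hq0 hq1 hr.ne'
      linarith
    rw [(Gfun_row_summable hq0 hq1 r).tsum_eq_zero_add, Gfun_zero_right, zero_add]
    have hstep : ∀ t : ℕ, Gfun q (r, t + 1) = ((r:ℝ)^3 * q ^ r) * (q ^ r) ^ t := by
      intro t
      rw [Gfun_pos_eq hr.ne' (Nat.succ_ne_zero t),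
        show r * (t + 1) = r + r * t by ring, pow_add, pow_mul]
      ring
    rw [tsum_congr hstep, tsum_mul_left, tsum_geometric_of_lt_one hq hq', sq]
    rw [div_eq_mul_inv]
    ring

lemma Gfun_summable (hq0 : 0 < q) (hq1 : q < 1) : Summable (Gfun q) := by
  refine (summable_prod_of_nonneg (Gfun_nonneg hq0)).mpr
    ⟨fun r => Gfun_row_summable hq0 hq1 r, ?_⟩
  refine (summable_s hq0 hq1 3).congr fun r => ?_
  exact (Gfun_row_tsum hq0 hq1 r).symm

lemma Gfun_hasSum (hq0 : 0 < q) (hq1 : q < 1) : HasSum (Gfun q) (Sq q 3) := by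
  have h := Gfun_summable hq0 hq1
  have : ∑' p, Gfun q p = Sq q 3 := by
    rw [h.tsum_prod' (fun r => Gfun_row_summable hq0 hq1 r), Sq]
    exact tsum_congr fun r => Gfun_row_tsum hq0 hq1 r
  exact this ▸ h.hasSum

/-- Lambert series evaluation of `Sq q 3`. -/
lemma Sq3_eq (hq0 : 0 < q) (hq1 : q < 1) :
    Sq q 3 = ∑' m : ℕ, (∑ d ∈ (m + 1).divisors, (d : ℝ) ^ 3) * q ^ (m + 1) := by
  have hfib := (Gfun_hasSum hq0 hq1).tsum_fiberwise (fun p => p.1 * p.2)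
  set h : ℕ → ℝ := fun n => ∑' x : ((fun p : ℕ × ℕ => p.1 * p.2) ⁻¹' {n}), Gfun q x with hdef
  have h0 : h 0 = 0 := by
    rw [hdef]
    have : ∀ x : ((fun p : ℕ × ℕ => p.1 * p.2) ⁻¹' {0}), Gfun q x = 0 := by
      rintro ⟨⟨a, b⟩, hx⟩
      simp only [Set.mem_preimage, Set.mem_singleton_iff, Nat.mul_eq_zero] at hx
      rcases hx with rfl | rfl
      · exact Gfun_zero_left b
      · exact Gfun_zero_right a
    simp only [this, tsum_zero]
  have hsucc : ∀ n : ℕ, h (n+1) = (∑ d ∈ (n + 1).divisors, (d : ℝ) ^ 3) * q ^ (n + 1) := by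
    intro n
    rw [hdef]
    simp only
    have hset : ((fun p : ℕ × ℕ => p.1 * p.2) ⁻¹' {n+1}) = ↑((n+1).divisorsAntidiagonal) := by
      ext p
      simp [Nat.mem_divisorsAntidiagonal]
    rw [hset, Finset.tsum_subtype' ((n+1).divisorsAntidiagonal) (Gfun q)]
    have hterm : ∀ p ∈ (n+1).divisorsAntidiagonal, Gfun q p = (p.1:ℝ)^3 * q^(n+1) := by
      intro p hp
      have h1 := Nat.ne_zero_of_mem_divisorsAntidiagonal hp
      have h2 := (Nat.mem_divisorsAntidiagonal.mp hp).1
      rw [show p = (p.1, p.2) from rfl, Gfun_pos_eq h1.1 h1.2]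
      rw [h2]
    rw [Finset.sum_congr rfl hterm,
      Nat.sum_divisorsAntidiagonal (f := fun d e => (d:ℝ)^3 * q^(n+1)), ← Finset.sum_mul]
  have htsum : Sq q 3 = ∑' n, h n := hfib.tsum_eq.symm
  rw [htsum, hfib.summable.tsum_eq_zero_add, h0, zero_add]
  exact tsum_congr hsucc

/-- The shifted-moment functions. -/

lemma Fq_zero (hq0 : 0 < q) (hq1 : q < 1) {n : ℕ} (hn : 1 ≤ n) : Fq q n 0 = 1 := by
  rw [Fq]
  have h1 : ∑ m ∈ Finset.range n, (m : ℝ) ^ 0 * cq q m = ∑ m ∈ Finset.range n, cq q m :=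
    Finset.sum_congr rfl fun m _ => by ring
  have h2 : n = (n - 1) + 1 := by omega
  rw [h1, h2, J hq0 hq1 (n-1)]
  rw [mul_one_div]
  exact div_self (Dq_pos hq0 hq1 (n-1)).ne'

lemma momentE_zero (hq0 : 0 < q) (hq1 : q < 1) {n : ℕ} (hn : 1 ≤ n) : momentE q n 0 = 1 := by
  rw [← Fq_zero hq0 hq1 hn, Fq, ← shiftE hq0 hq1 hn 0, momentE]
  exact Finset.sum_congr rfl fun h _ => by ring

lemma Fq_one (hq0 : 0 < q) (hq1 : q < 1) {n : ℕ} (hn : 1 ≤ n) :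
    Fq q n 1 = (n : ℝ) * momentE q n 0 - momentE q n 1 := by
  rw [Fq, ← shiftE hq0 hq1 hn 1, momentE, momentE, Finset.mul_sum, ← Finset.sum_sub_distrib]
  exact Finset.sum_congr rfl fun h _ => by ring

lemma Fq_two (hq0 : 0 < q) (hq1 : q < 1) {n : ℕ} (hn : 1 ≤ n) :
    Fq q n 2 = (n : ℝ)^2 * momentE q n 0 - 2 * (n:ℝ) * momentE q n 1 + momentE q n 2 := by
  rw [Fq, ← shiftE hq0 hq1 hn 2, momentE, momentE, momentE]
  simp only [Finset.mul_sum, ← Finset.sum_sub_distrib, ← Finset.sum_add_distrib]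
  exact Finset.sum_congr rfl fun h _ => by ring

lemma Fq_three (hq0 : 0 < q) (hq1 : q < 1) {n : ℕ} (hn : 1 ≤ n) :
    Fq q n 3 = (n : ℝ)^3 * momentE q n 0 - 3 * (n:ℝ)^2 * momentE q n 1
      + 3 * (n:ℝ) * momentE q n 2 - momentE q n 3 := by
  rw [Fq, ← shiftE hq0 hq1 hn 3, momentE, momentE, momentE, momentE]
  simp only [Finset.mul_sum, ← Finset.sum_sub_distrib, ← Finset.sum_add_distrib]
  exact Finset.sum_congr rfl fun h _ => by ring

lemma Fq_four (hq0 : 0 < q) (hq1 : q < 1) {n : ℕ} (hn : 1 ≤ n) :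
    Fq q n 4 = (n : ℝ)^4 * momentE q n 0 - 4 * (n:ℝ)^3 * momentE q n 1
      + 6 * (n:ℝ)^2 * momentE q n 2 - 4 * (n:ℝ) * momentE q n 3 + momentE q n 4 := by
  rw [Fq, ← shiftE hq0 hq1 hn 4, momentE, momentE, momentE, momentE, momentE]
  simp only [Finset.mul_sum, ← Finset.sum_sub_distrib, ← Finset.sum_add_distrib]
  exact Finset.sum_congr rfl fun h _ => by ring

/-- the exact finite-`n` identity between the two cumulant combinations -/
lemma combo_eq (hq0 : 0 < q) (hq1 : q < 1) {n : ℕ} (hn : 1 ≤ n) :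
    momentE q n 4 - 4 * momentE q n 1 * momentE q n 3
        - 3 * (momentE q n 2) ^ 2 + 12 * (momentE q n 1) ^ 2 * momentE q n 2
        - 6 * (momentE q n 1) ^ 4
      = Fq q n 4 - 4 * Fq q n 1 * Fq q n 3 - 3 * (Fq q n 2) ^ 2
        + 12 * (Fq q n 1) ^ 2 * Fq q n 2 - 6 * (Fq q n 1) ^ 4 := by
  rw [Fq_one hq0 hq1 hn, Fq_two hq0 hq1 hn, Fq_three hq0 hq1 hn, Fq_four hq0 hq1 hn,
    momentE_zero hq0 hq1 hn]
  ring

lemma Fq_tendsto (hq0 : 0 < q) (hq1 : q < 1) (k : ℕ) :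
    Tendsto (fun n => Fq q n k) atTop (nhds (Cq q * Tq q k)) := by
  apply Tendsto.mul
  · exact (Dq_tendsto hq0 hq1).comp (tendsto_sub_atTop_nat 1)
  · exact (summable_c hq0 hq1 k).hasSum.tendsto_sum_nat

lemma CqTq_zero (hq0 : 0 < q) (hq1 : q < 1) : Cq q * Tq q 0 = 1 := by
  refine tendsto_nhds_unique (Fq_tendsto hq0 hq1 0) ?_
  have hev : (fun _ : ℕ => (1:ℝ)) =ᶠ[atTop] fun n => Fq q n 0 := by
    filter_upwards [eventually_ge_atTop 1] with n hn
    exact (Fq_zero hq0 hq1 hn).symm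
  exact tendsto_const_nhds.congr' hev

lemma combo_value (hq0 : 0 < q) (hq1 : q < 1) :
    (Cq q * Tq q 4) - 4 * (Cq q * Tq q 1) * (Cq q * Tq q 3) - 3 * (Cq q * Tq q 2) ^ 2
      + 12 * (Cq q * Tq q 1) ^ 2 * (Cq q * Tq q 2) - 6 * (Cq q * Tq q 1) ^ 4 = Sq q 3 := by
  have h0 := CqTq_zero hq0 hq1
  have t1 : Tq q 1 = Sq q 0 * Tq q 0 := by
    have := Tq_rec hq0 hq1 (k := 1) one_ne_zero
    simpa using this
  have t2 : Tq q 2 = Sq q 1 * Tq q 0 + Sq q 0 * Tq q 1 := by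
    have := Tq_rec hq0 hq1 (k := 2) two_ne_zero
    simpa [Finset.sum_range_succ] using this
  have t3 : Tq q 3 = Sq q 2 * Tq q 0 + 2 * (Sq q 1 * Tq q 1) + Sq q 0 * Tq q 2 := by
    have := Tq_rec hq0 hq1 (k := 3) three_ne_zero
    simp [Finset.sum_range_succ] at this
    rw [this]; norm_num; ring
  have t4 : Tq q 4 = Sq q 3 * Tq q 0 + 3 * (Sq q 2 * Tq q 1) + 3 * (Sq q 1 * Tq q 2)
      + Sq q 0 * Tq q 3 := by
    have := Tq_rec hq0 hq1 (k := 4) four_ne_zero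
    simp [Finset.sum_range_succ] at this
    rw [this]; norm_num; ring
  set μ1 := Cq q * Tq q 1 with hμ1
  set μ2 := Cq q * Tq q 2 with hμ2
  set μ3 := Cq q * Tq q 3 with hμ3
  have m1 : μ1 = Sq q 0 := by rw [hμ1, t1, show Cq q * (Sq q 0 * Tq q 0) = Sq q 0 * (Cq q * Tq q 0) by ring, h0, mul_one]
  have m2 : μ2 = Sq q 1 + Sq q 0 * μ1 := by
    rw [hμ2, t2, hμ1]
    calc Cq q * (Sq q 1 * Tq q 0 + Sq q 0 * Tq q 1)
        = Sq q 1 * (Cq q * Tq q 0) + Sq q 0 * (Cq q * Tq q 1) := by ring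
      _ = Sq q 1 + Sq q 0 * (Cq q * Tq q 1) := by rw [h0, mul_one]
  have m3 : μ3 = Sq q 2 + 2 * Sq q 1 * μ1 + Sq q 0 * μ2 := by
    rw [hμ3, t3, hμ1, hμ2]
    calc Cq q * (Sq q 2 * Tq q 0 + 2 * (Sq q 1 * Tq q 1) + Sq q 0 * Tq q 2)
        = Sq q 2 * (Cq q * Tq q 0) + 2 * Sq q 1 * (Cq q * Tq q 1) + Sq q 0 * (Cq q * Tq q 2) := by ring
      _ = Sq q 2 + 2 * Sq q 1 * (Cq q * Tq q 1) + Sq q 0 * (Cq q * Tq q 2) := by rw [h0, mul_one]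
  have m4 : Cq q * Tq q 4 = Sq q 3 + 3 * Sq q 2 * μ1 + 3 * Sq q 1 * μ2 + Sq q 0 * μ3 := by
    rw [t4, hμ1, hμ2, hμ3]
    calc Cq q * (Sq q 3 * Tq q 0 + 3 * (Sq q 2 * Tq q 1) + 3 * (Sq q 1 * Tq q 2) + Sq q 0 * Tq q 3)
        = Sq q 3 * (Cq q * Tq q 0) + 3 * Sq q 2 * (Cq q * Tq q 1) + 3 * Sq q 1 * (Cq q * Tq q 2)
          + Sq q 0 * (Cq q * Tq q 3) := by ring
      _ = Sq q 3 + 3 * Sq q 2 * (Cq q * Tq q 1) + 3 * Sq q 1 * (Cq q * Tq q 2)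
          + Sq q 0 * (Cq q * Tq q 3) := by rw [h0, mul_one]
  rw [m4, m3, m2, m1]
  ring

end CumulantAux

open CumulantAux in
/-- For `0 < q < 1`, the fourth cumulant of `γ_n^*(1)` satisfies
`lim_{n→∞} (e_{n,4} - 4 e_{n,1} e_{n,3} - 3 e_{n,2}^2 + 12 e_{n,1}^2 e_{n,2} - 6 e_{n,1}^4)
  = ∑_{m=1}^∞ σ_3(m) q^m`. -/
theorem fourth_cumulant_limit (q : ℝ) (hq0 : 0 < q) (hq1 : q < 1) :
    Filter.Tendsto
      (fun n : ℕ => momentE q n 4 - 4 * momentE q n 1 * momentE q n 3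
        - 3 * (momentE q n 2) ^ 2 + 12 * (momentE q n 1) ^ 2 * momentE q n 2
        - 6 * (momentE q n 1) ^ 4)
      Filter.atTop
      (nhds (∑' m : ℕ, (∑ d ∈ (m + 1).divisors, (d : ℝ) ^ 3) * q ^ (m + 1))) := by
  have h1 := Fq_tendsto hq0 hq1 1
  have h2 := Fq_tendsto hq0 hq1 2
  have h3 := Fq_tendsto hq0 hq1 3
  have h4 := Fq_tendsto hq0 hq1 4
  have hcomb : Tendsto (fun n => Fq q n 4 - 4 * Fq q n 1 * Fq q n 3 - 3 * (Fq q n 2) ^ 2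
      + 12 * (Fq q n 1) ^ 2 * Fq q n 2 - 6 * (Fq q n 1) ^ 4) atTop
      (nhds ((Cq q * Tq q 4) - 4 * (Cq q * Tq q 1) * (Cq q * Tq q 3) - 3 * (Cq q * Tq q 2) ^ 2
        + 12 * (Cq q * Tq q 1) ^ 2 * (Cq q * Tq q 2) - 6 * (Cq q * Tq q 1) ^ 4)) := by
    exact ((((h4.sub (((h1.const_mul 4).mul h3))).sub ((h2.pow 2).const_mul 3)).add
      (((h1.pow 2).const_mul 12).mul h2)).sub ((h1.pow 4).const_mul 6))
  rw [combo_value hq0 hq1, Sq3_eq hq0 hq1] at hcomb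
  refine hcomb.congr' ?_
  filter_upwards [eventually_ge_atTop 1] with n hn
  exact (combo_eq hq0 hq1 hn).symm
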